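/- Let h ⊆ so(n) be a subalgebra, h_i ⊆ so(n_i) irreducible ideals of h with ℝⁿ = ℝ^{n_1} ⊕ ... ⊕ ℝ^{n_s} ⊕ ℝ^{n_{s+1}} an orthogonal decomposition such that h = h_1 ⊕ ... ⊕ h_s, h annihilates ℝ^{n_{s+1}}, and h_i(ℝ^{n_j}) = 0 for i ≠ j. Then every weak-curvature tensor P ∈ P(h) decomposes as P = P_1 + ... + P_s with P_i ∈ P(h_i) (each P_i vanishing on the summands other than ℝ^{n_i} and taking values in h_i), i.e., P(h) = P(h_1) ⊕ ... ⊕ P(h_s). -/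

import Mathlib

open Matrix

attribute [local instance 100] LieRing.ofAssociativeRing

/-- `so(n)` as a Lie subalgebra of the matrix Lie algebra. -/
noncomputable def son (n : ℕ) : LieSubalgebra ℝ (Matrix (Fin n) (Fin n) ℝ) :=
  skewAdjointMatricesLieSubalgebra (1 : Matrix (Fin n) (Fin n) ℝ)

/-- The space `P(h)` of weak-curvature tensors of type `h ⊆ so(n)`. -/
noncomputable def Pset (n : ℕ) (h : LieSubalgebra ℝ (Matrix (Fin n) (Fin n) ℝ)) :
    Set ((Fin n → ℝ) →ₗ[ℝ] Matrix (Fin n) (Fin n) ℝ) :=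
  {P | (∀ u : Fin n → ℝ, P u ∈ h) ∧
    ∀ u v w : Fin n → ℝ,
      ((P u).mulVec v) ⬝ᵥ w + ((P v).mulVec w) ⬝ᵥ u + ((P w).mulVec u) ⬝ᵥ v = 0}

private lemma sumMulVec {ι : Type*} {n : ℕ} (t : Finset ι)
    (f : ι → Matrix (Fin n) (Fin n) ℝ) (w : Fin n → ℝ) :
    (∑ m ∈ t, f m).mulVec w = ∑ m ∈ t, (f m).mulVec w :=
  map_sum (Matrix.mulVec.addMonoidHomLeft w) f t

private lemma mulVecSum {ι : Type*} {n : ℕ} (t : Finset ι)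
    (A : Matrix (Fin n) (Fin n) ℝ) (v : ι → Fin n → ℝ) :
    A.mulVec (∑ m ∈ t, v m) = ∑ m ∈ t, A.mulVec (v m) := by
  exact map_sum A.mulVecLin v t

private lemma sumDot {ι : Type*} {n : ℕ} (t : Finset ι)
    (f : ι → Fin n → ℝ) (w : Fin n → ℝ) :
    (∑ m ∈ t, f m) ⬝ᵥ w = ∑ m ∈ t, (f m) ⬝ᵥ w := by
  simp only [dotProduct, Finset.sum_apply, Finset.sum_mul]
  exact Finset.sum_comm

private lemma dotSum {ι : Type*} {n : ℕ} (t : Finset ι)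
    (w : Fin n → ℝ) (f : ι → Fin n → ℝ) :
    w ⬝ᵥ (∑ m ∈ t, f m) = ∑ m ∈ t, w ⬝ᵥ (f m) := by
  simp only [dotProduct, Finset.sum_apply, Finset.mul_sum]
  exact Finset.sum_comm

private lemma matExt {n : ℕ} (A : Matrix (Fin n) (Fin n) ℝ)
    (hA : ∀ w, A.mulVec w = 0) : A = 0 := by
  apply Matrix.toLin'.injective
  apply LinearMap.ext
  intro w
  simp [Matrix.toLin'_apply, hA w]

/-- Borel–Lichnerowicz decomposition of the space of weak-curvature tensors:
given the orthogonal decomposition `ℝⁿ = ℝ^{n_1} ⊕ ⋯ ⊕ ℝ^{n_s} ⊕ ℝ^{n_{s+1}}` (the subspaces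
`V 0, …, V s`, the last being annihilated by `h`) and the decomposition `h = h_1 ⊕ ⋯ ⊕ h_s` into
ideals with `h_i` irreducible on `ℝ^{n_i}` and `h_i(ℝ^{n_j}) = 0` for `i ≠ j`, every
`P ∈ P(h)` decomposes uniquely as `P = P_1 + ⋯ + P_s` with `P_i ∈ P(h_i)`, i.e.
`P(h) = P(h_1) ⊕ ⋯ ⊕ P(h_s)`. -/
theorem stmt17 (n s : ℕ)
    (h : LieSubalgebra ℝ (Matrix (Fin n) (Fin n) ℝ)) (hh : h ≤ son n)
    (V : Fin (s + 1) → Submodule ℝ (Fin n → ℝ))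
    (hi : Fin s → LieSubalgebra ℝ (Matrix (Fin n) (Fin n) ℝ))
    -- the `V j` form an orthogonal direct sum decomposition of `ℝⁿ`
    (hVorth : ∀ i j : Fin (s + 1), i ≠ j → ∀ u ∈ V i, ∀ v ∈ V j, u ⬝ᵥ v = 0)
    (hVsum : DirectSum.IsInternal V)
    -- `h` is the direct sum of the ideals `h_i`
    (hisub : ∀ i : Fin s, hi i ≤ h)
    (hideal : ∀ i : Fin s, ∀ A ∈ h, ∀ B ∈ hi i, ⁅A, B⁆ ∈ hi i)
    (hdirect : ∀ A ∈ h, ∃! f : Fin s → Matrix (Fin n) (Fin n) ℝ,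
      (∀ i : Fin s, f i ∈ hi i) ∧ A = ∑ i, f i)
    -- `h` annihilates the last summand
    (hann : ∀ A ∈ h, ∀ v ∈ V (Fin.last s), A.mulVec v = 0)
    -- `h_i` annihilates `V j` for `j ≠ i`
    (hzero : ∀ (i : Fin s) (j : Fin (s + 1)), j ≠ i.castSucc →
      ∀ A ∈ hi i, ∀ v ∈ V j, A.mulVec v = 0)
    -- `h_i ⊆ so(n_i)` is irreducible
    (hirr : ∀ i : Fin s, ∀ W : Submodule ℝ (Fin n → ℝ), W ≤ V i.castSucc →
      (∀ A ∈ hi i, ∀ w ∈ W, A.mulVec w ∈ W) → W = ⊥ ∨ W = V i.castSucc) :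
    ∀ P ∈ Pset n h, ∃! Q : Fin s → ((Fin n → ℝ) →ₗ[ℝ] Matrix (Fin n) (Fin n) ℝ),
      (∀ i : Fin s, Q i ∈ Pset n (hi i)) ∧
      (∀ (i : Fin s) (j : Fin (s + 1)), j ≠ i.castSucc → ∀ v ∈ V j, Q i v = 0) ∧
      P = ∑ i, Q i := by
  classical
  intro P hP
  obtain ⟨hPh, hPB⟩ := hP
  -- elements of `h` are skew-symmetric
  have hskew : ∀ A ∈ h, ∀ x y : Fin n → ℝ, (A.mulVec x) ⬝ᵥ y = -(x ⬝ᵥ A.mulVec y) := by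
    intro A hA x y
    have hA' := hh hA
    rw [son, mem_skewAdjointMatricesLieSubalgebra, mem_skewAdjointMatricesSubmodule] at hA'
    have ht : Aᵀ = -A := by
      simpa [Matrix.IsSkewAdjoint, Matrix.IsAdjointPair] using hA'
    calc (A.mulVec x) ⬝ᵥ y = y ⬝ᵥ (A.mulVec x) := dotProduct_comm _ _
      _ = (A.vecMul y) ⬝ᵥ x := dotProduct_mulVec _ _ _
      _ = (Aᵀ.mulVec y) ⬝ᵥ x := by rw [Matrix.mulVec_transpose]
      _ = -(x ⬝ᵥ A.mulVec y) := by
          rw [ht, Matrix.neg_mulVec, neg_dotProduct, dotProduct_comm]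
  -- projections onto the summands
  set e := LinearEquiv.ofBijective (DirectSum.coeLinearMap V) hVsum with he
  set π : Fin (s + 1) → ((Fin n → ℝ) →ₗ[ℝ] (Fin n → ℝ)) := fun j =>
    (V j).subtype ∘ₗ (DirectSum.component ℝ (Fin (s + 1)) (fun j => V j) j) ∘ₗ
      e.symm.toLinearMap with hπ
  have hπapp : ∀ (j : Fin (s + 1)) (x : Fin n → ℝ), π j x = ↑(e.symm x j) := fun j x => rfl
  have hπmem : ∀ (j : Fin (s + 1)) (x : Fin n → ℝ), π j x ∈ V j := by
    intro j x
    rw [hπapp]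
    exact (e.symm x j).2
  have hπ_same : ∀ (j : Fin (s + 1)) (x : Fin n → ℝ), x ∈ V j → π j x = x := by
    intro j x hx
    rw [hπapp, hVsum.ofBijective_coeLinearMap_of_mem hx]
  have hπ_ne : ∀ (j k : Fin (s + 1)) (x : Fin n → ℝ), x ∈ V k → j ≠ k → π j x = 0 := by
    intro j k x hx hjk
    rw [hπapp, hVsum.ofBijective_coeLinearMap_of_mem_ne hjk.symm hx]
    rfl
  have hπsum : ∀ x : Fin n → ℝ, ∑ j, π j x = x := by
    intro x
    calc ∑ j, π j x
        = ∑ j, DirectSum.coeLinearMap V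
            (DirectSum.of (fun j => (V j : Submodule ℝ (Fin n → ℝ))) j (e.symm x j)) := by
          refine Finset.sum_congr rfl fun j _ => ?_
          rw [DirectSum.coeLinearMap_of, hπapp]
      _ = DirectSum.coeLinearMap V
            (∑ j, DirectSum.of (fun j => (V j : Submodule ℝ (Fin n → ℝ))) j (e.symm x j)) :=
          (map_sum _ _ _).symm
      _ = DirectSum.coeLinearMap V (e.symm x) := by rw [DirectSum.sum_univ_of]
      _ = x := e.apply_symm_apply x
  -- the image of any element of `hi m` lies in `V m.castSucc`
  have hIm : ∀ (m : Fin s), ∀ B ∈ hi m, ∀ x : Fin n → ℝ, B.mulVec x ∈ V m.castSucc := by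
    intro m B hB x
    have hBh := hisub m hB
    have hc : ∀ j : Fin (s + 1), j ≠ m.castSucc → π j (B.mulVec x) = 0 := by
      intro j hj
      set y := B.mulVec x with hy
      set c := π j y with hcdef
      have hcV : c ∈ V j := hπmem j _
      have h1 : y ⬝ᵥ c = c ⬝ᵥ c := by
        conv_lhs => rw [← hπsum y]
        rw [sumDot]
        exact Finset.sum_eq_single j (fun j' _ hj' =>
          hVorth j' j hj' _ (hπmem j' _) _ hcV)
          (fun habs => absurd (Finset.mem_univ j) habs)
      have h2 : y ⬝ᵥ c = -(x ⬝ᵥ B.mulVec c) := hskew B hBh _ _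
      have h3 : B.mulVec c = 0 := hzero m j hj B hB _ hcV
      have h4 : c ⬝ᵥ c = 0 := by
        rw [← h1, h2, h3, dotProduct_zero, neg_zero]
      exact dotProduct_self_eq_zero.mp h4
    have h5 : B.mulVec x = π m.castSucc (B.mulVec x) := by
      conv_lhs => rw [← hπsum (B.mulVec x)]
      exact Finset.sum_eq_single m.castSucc (fun j _ hj => hc j hj)
        (fun habs => absurd (Finset.mem_univ _) habs)
    rw [h5]
    exact hπmem _ _
  -- `h` preserves each summand `V k.castSucc`
  have hAct : ∀ A ∈ h, ∀ (k : Fin s), ∀ v ∈ V k.castSucc, A.mulVec v ∈ V k.castSucc := by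
    intro A hA k v hv
    obtain ⟨f, ⟨hf1, hf2⟩, -⟩ := hdirect A hA
    have h1 : A.mulVec v = (f k).mulVec v := by
      rw [hf2, sumMulVec]
      exact Finset.sum_eq_single k
        (fun m _ hm => hzero m k.castSucc (fun hc => hm (Fin.castSucc_inj.mp hc).symm)
          (f m) (hf1 m) v hv)
        (fun habs => absurd (Finset.mem_univ _) habs)
    rw [h1]
    exact hIm k (f k) (hf1 k) v
  -- `P` vanishes on the last summand
  have hPlast : ∀ v ∈ V (Fin.last s), P v = 0 := by
    intro v hv
    refine matExt _ fun w => ?_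
    have key : ∀ u : Fin n → ℝ, ((P v).mulVec w) ⬝ᵥ u = 0 := by
      intro u
      have hB := hPB u v w
      have h1 : (P u).mulVec v = 0 := hann (P u) (hPh u) v hv
      have h3 : ((P w).mulVec u) ⬝ᵥ v = 0 := by
        rw [hskew (P w) (hPh w) u v, hann (P w) (hPh w) v hv, dotProduct_zero, neg_zero]
      rw [h1, h3, zero_dotProduct, add_zero, zero_add] at hB
      exact hB
    exact dotProduct_self_eq_zero.mp (key _)
  -- key vanishing: components of `P v` for `v ∈ V k.castSucc` other than the `k`-th vanish
  have hBk : ∀ (k : Fin s) (v : Fin n → ℝ), v ∈ V k.castSucc →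
      ∀ f : Fin s → Matrix (Fin n) (Fin n) ℝ, (∀ m, f m ∈ hi m) → P v = ∑ m, f m →
      ∀ i, i ≠ k → f i = 0 := by
    intro k v hv f hf1 hf2 i hik
    have hcs : (k.castSucc : Fin (s + 1)) ≠ i.castSucc :=
      fun hc => hik (Fin.castSucc_inj.mp hc).symm
    have ha : ∀ w ∈ V i.castSucc, ∀ u ∈ V i.castSucc, ((f i).mulVec w) ⬝ᵥ u = 0 := by
      intro w hw u hu
      have hB := hPB u v w
      have h1 : ((P u).mulVec v) ⬝ᵥ w = 0 :=
        hVorth k.castSucc i.castSucc hcs _ (hAct (P u) (hPh u) k v hv) w hw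
      have h3 : ((P w).mulVec u) ⬝ᵥ v = 0 :=
        hVorth i.castSucc k.castSucc hcs.symm _ (hAct (P w) (hPh w) i u hu) v hv
      have h2 : (P v).mulVec w = (f i).mulVec w := by
        rw [hf2, sumMulVec]
        exact Finset.sum_eq_single i
          (fun m _ hm => hzero m i.castSucc (fun hc => hm (Fin.castSucc_inj.mp hc).symm)
            (f m) (hf1 m) w hw)
          (fun habs => absurd (Finset.mem_univ _) habs)
      rw [h1, h2, h3, add_zero, zero_add] at hB
      exact hB
    have hb : ∀ w ∈ V i.castSucc, (f i).mulVec w = 0 := by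
      intro w hw
      exact dotProduct_self_eq_zero.mp (ha w hw _ (hIm i (f i) (hf1 i) w))
    refine matExt _ fun x => ?_
    have h6 : (f i).mulVec x = (f i).mulVec (π i.castSucc x) := by
      conv_lhs => rw [← hπsum x]
      rw [mulVecSum]
      exact Finset.sum_eq_single i.castSucc
        (fun j _ hj => hzero i j hj (f i) (hf1 i) _ (hπmem j x))
        (fun habs => absurd (Finset.mem_univ _) habs)
    rw [h6, hb _ (hπmem _ _)]
  -- `P` maps `V k.castSucc` into `hi k`
  have hPdecomp : ∀ (k : Fin s) (v : Fin n → ℝ), v ∈ V k.castSucc → P v ∈ hi k := by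
    intro k v hv
    obtain ⟨f, ⟨hf1, hf2⟩, -⟩ := hdirect (P v) (hPh v)
    have h1 : P v = f k := by
      conv_lhs => rw [hf2]
      exact Finset.sum_eq_single k (fun m _ hm => hBk k v hv f hf1 hf2 m hm)
        (fun habs => absurd (Finset.mem_univ _) habs)
    rw [h1]
    exact hf1 k
  -- the components of `P`
  set Q : Fin s → ((Fin n → ℝ) →ₗ[ℝ] Matrix (Fin n) (Fin n) ℝ) :=
    fun i => P ∘ₗ π i.castSucc with hQ
  have hQapp : ∀ (i : Fin s) (u : Fin n → ℝ), Q i u = P (π i.castSucc u) := fun i u => rfl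
  have hQmem : ∀ (i : Fin s) (u : Fin n → ℝ), Q i u ∈ hi i := by
    intro i u
    rw [hQapp]
    exact hPdecomp i _ (hπmem _ _)
  -- the sum of the components is `P`
  have hQsum : P = ∑ i, Q i := by
    refine LinearMap.ext fun u => ?_
    rw [LinearMap.sum_apply]
    conv_lhs => rw [← hπsum u, map_sum]
    rw [Fin.sum_univ_castSucc]
    have hlast : P (π (Fin.last s) u) = 0 := hPlast _ (hπmem _ _)
    rw [hlast, add_zero]
    exact Finset.sum_congr rfl fun i _ => (hQapp i u).symm
  -- reduction of the Bianchi terms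
  have hterm : ∀ (i : Fin s) (a b c : Fin n → ℝ),
      ((P (π i.castSucc a)).mulVec b) ⬝ᵥ c
        = ((P (π i.castSucc a)).mulVec (π i.castSucc b)) ⬝ᵥ (π i.castSucc c) := by
    intro i a b c
    have hA : P (π i.castSucc a) ∈ hi i := hPdecomp i _ (hπmem _ _)
    have h1 : (P (π i.castSucc a)).mulVec b
        = (P (π i.castSucc a)).mulVec (π i.castSucc b) := by
      conv_lhs => rw [← hπsum b]
      rw [mulVecSum]
      exact Finset.sum_eq_single i.castSucc
        (fun j _ hj => hzero i j hj _ hA _ (hπmem j b))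
        (fun habs => absurd (Finset.mem_univ _) habs)
    rw [h1]
    have h2 : (P (π i.castSucc a)).mulVec (π i.castSucc b) ∈ V i.castSucc :=
      hIm i _ hA _
    conv_lhs => rw [← hπsum c]
    rw [dotSum]
    exact Finset.sum_eq_single i.castSucc
      (fun j _ hj => hVorth i.castSucc j (fun hc => hj hc.symm) _ h2 _ (hπmem j c))
      (fun habs => absurd (Finset.mem_univ _) habs)
  refine ⟨Q, ⟨?_, ?_, hQsum⟩, ?_⟩
  · -- each `Q i` is a weak-curvature tensor of type `hi i`
    intro i
    refine ⟨hQmem i, fun u v w => ?_⟩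
    rw [hQapp, hQapp, hQapp, hterm i u v w, hterm i v w u, hterm i w u v]
    exact hPB (π i.castSucc u) (π i.castSucc v) (π i.castSucc w)
  · -- `Q i` vanishes on the other summands
    intro i j hj v hv
    rw [hQapp, hπ_ne i.castSucc j v hv (fun hc => hj hc.symm), map_zero]
  · -- uniqueness
    intro Q' ⟨hQ'1, _, hQ'3⟩
    funext i
    refine LinearMap.ext fun u => ?_
    obtain ⟨f, hf, huniq⟩ := hdirect (P u) (hPh u)
    have e1 : (fun m => Q m u) = f :=
      huniq _ ⟨fun m => hQmem m u, by rw [hQsum, LinearMap.sum_apply]⟩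
    have e2 : (fun m => Q' m u) = f :=
      huniq _ ⟨fun m => (hQ'1 m).1 u, by rw [hQ'3, LinearMap.sum_apply]⟩
    calc Q' i u = f i := congrFun e2 i
      _ = Q i u := (congrFun e1 i).symm
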